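/- Fix N_x ≥ 1 and grid functions ρ : Fin (N_x+2) × Fin (N_x+2) → ℝ and ψ : Fin (N_x+2) × Fin (N_x+2) → ℝ (indices 0 and N_x+1 being ghost nodes). Assume the periodic extension in the first index (ρ_{0,j} = ρ_{N_x,j}, ρ_{N_x+1,j} = ρ_{1,j}), the even extension in the second index (ρ_{i,0} = ρ_{i,1}, ρ_{i,N_x+1} = ρ_{i,N_x}), and the odd extension of the flux speed (ψ_{i,0} = −ψ_{i,1}, ψ_{i,N_x+1} = −ψ_{i,N_x}). Define for interior indices the fluxes g¹_{i±1/2,j} = (1/2)(υ_j ρ_{i,j} + υ_j ρ_{i±1,j} − |υ_j|(±(ρ_{i±1,j} − ρ_{i,j})/h)) and g²_{i,j±1/2} = (1/2)(ψ_{i,j}ρ_{i,j} + ψ_{i,j±1}ρ_{i,j±1} − max(|ψ_{i,j}|,|ψ_{i,j±1}|)(±(ρ_{i,j±1} − ρ_{i,j})/k)). Then ∑_{i,j=1}^{N_x} ( −(1/h)[g¹_{i+1/2,j} − g¹_{i−1/2,j}] − (1/k)[g²_{i,j+1/2} − g²_{i,j−1/2}] + ε(ρ_{i,j+1} − 2ρ_{i,j}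 + ρ_{i,j−1})/k² ) = 0. -/

import Mathlib

private lemma tele_icc (f : ℕ → ℝ) (n : ℕ) :
    ∑ i ∈ Finset.Icc 1 n, (f i - f (i - 1)) = f n - f 0 := by
  induction n with
  | zero => simp
  | succ n ih =>
    rw [Finset.sum_Icc_succ_top (by omega), ih]
    simp only [Nat.add_sub_cancel]
    ring

/-- Discrete mass conservation for the finite-volume Rusanov scheme with periodic ghost cells in
position, even extension of the density in velocity, and odd extension of the flux speed:
the right-hand side of the semi-discrete forward Kolmogorov scheme sums to zero. -/
theorem rusanov_mass_conservation (Nx : ℕ) (hNx : 1 ≤ Nx)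
    (h k ε : ℝ) (hh : h ≠ 0) (hk : k ≠ 0)
    (ρ ψ : ℕ → ℕ → ℝ) (υ : ℕ → ℝ)
    (hper0 : ∀ j, ρ 0 j = ρ Nx j) (hper1 : ∀ j, ρ (Nx + 1) j = ρ 1 j)
    (heven0 : ∀ i, ρ i 0 = ρ i 1) (heven1 : ∀ i, ρ i (Nx + 1) = ρ i Nx)
    (hodd0 : ∀ i, ψ i 0 = -ψ i 1) (hodd1 : ∀ i, ψ i (Nx + 1) = -ψ i Nx)
    (g1 g2 : ℕ → ℕ → ℝ)
    (hg1 : ∀ i j, g1 i j = (1 / 2) * (υ j * ρ i j + υ j * ρ (i + 1) j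
      - |υ j| * ((ρ (i + 1) j - ρ i j) / h)))
    (hg2 : ∀ i j, g2 i j = (1 / 2) * (ψ i j * ρ i j + ψ i (j + 1) * ρ i (j + 1)
      - max |ψ i j| |ψ i (j + 1)| * ((ρ i (j + 1) - ρ i j) / k))) :
    ∑ i ∈ Finset.Icc 1 Nx, ∑ j ∈ Finset.Icc 1 Nx,
      (-(1 / h) * (g1 i j - g1 (i - 1) j) - (1 / k) * (g2 i j - g2 i (j - 1))
        + ε * (ρ i (j + 1) - 2 * ρ i j + ρ i (j - 1)) / k ^ 2) = 0 := by
  have hg1per : ∀ j, g1 Nx j = g1 0 j := by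
    intro j
    rw [hg1, hg1, hper1, hper0]
  have hg2top : ∀ i, g2 i Nx = 0 := by
    intro i
    rw [hg2, hodd1, heven1]
    ring
  have hg2bot : ∀ i, g2 i 0 = 0 := by
    intro i
    rw [hg2]
    simp only [Nat.zero_add]
    rw [hodd0, heven0]
    ring
  have step : ∑ i ∈ Finset.Icc 1 Nx, ∑ j ∈ Finset.Icc 1 Nx,
      (-(1 / h) * (g1 i j - g1 (i - 1) j) - (1 / k) * (g2 i j - g2 i (j - 1))
        + ε * (ρ i (j + 1) - 2 * ρ i j + ρ i (j - 1)) / k ^ 2)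
      = (∑ i ∈ Finset.Icc 1 Nx, ∑ j ∈ Finset.Icc 1 Nx,
          (-(1 / h)) * (g1 i j - g1 (i - 1) j))
        + (∑ i ∈ Finset.Icc 1 Nx, ∑ j ∈ Finset.Icc 1 Nx,
          ((-(1 / k)) * (g2 i j - g2 i (j - 1))
            + ε * (ρ i (j + 1) - 2 * ρ i j + ρ i (j - 1)) / k ^ 2)) := by
    rw [← Finset.sum_add_distrib]
    refine Finset.sum_congr rfl fun i _ => ?_
    rw [← Finset.sum_add_distrib]
    refine Finset.sum_congr rfl fun j _ => ?_
    ring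
  rw [step]
  have first : (∑ i ∈ Finset.Icc 1 Nx, ∑ j ∈ Finset.Icc 1 Nx,
      (-(1 / h)) * (g1 i j - g1 (i - 1) j)) = 0 := by
    rw [Finset.sum_comm]
    refine Finset.sum_eq_zero fun j _ => ?_
    rw [← Finset.mul_sum, tele_icc (fun i => g1 i j), hg1per j]
    ring
  have second : ∀ i, (∑ j ∈ Finset.Icc 1 Nx,
      ((-(1 / k)) * (g2 i j - g2 i (j - 1))
        + ε * (ρ i (j + 1) - 2 * ρ i j + ρ i (j - 1)) / k ^ 2)) = 0 := by
    intro i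
    rw [Finset.sum_add_distrib, ← Finset.mul_sum, tele_icc (fun j => g2 i j),
      hg2top i, hg2bot i]
    have hcongr : ∑ j ∈ Finset.Icc 1 Nx,
        ε * (ρ i (j + 1) - 2 * ρ i j + ρ i (j - 1)) / k ^ 2
        = ∑ j ∈ Finset.Icc 1 Nx,
          ((fun j => ε * (ρ i (j + 1) - ρ i j) / k ^ 2) j
            - (fun j => ε * (ρ i (j + 1) - ρ i j) / k ^ 2) (j - 1)) := by
      refine Finset.sum_congr rfl fun j hj => ?_
      have hj1 : 1 ≤ j := (Finset.mem_Icc.mp hj).1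
      have hj2 : j - 1 + 1 = j := by omega
      simp only [hj2]
      ring
    rw [hcongr, tele_icc]
    simp only [Nat.zero_add]
    rw [heven1 i, heven0 i]
    ring
  rw [first, Finset.sum_eq_zero fun i _ => second i]
  ring
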